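/- Let d be an integer, n ≥ 1, and ε a complex number with complex conjugate ε̄. Consider the block-diagonal complex matrix B_L consisting of: one n×n tridiagonal block with diagonal entries -2d and off-diagonal entries d; n(n-1)/2 copies of the 2×2 block [[-2εε̄, -(ε+ε̄)], [-(ε+ε̄), -2]]; and n copies of the 2×2 block [[2εε̄, ε+ε̄], [ε+ε̄, 2]]. Then det B_L = (-d)^n · (n+1) · (4εε̄ - (ε+ε̄)²)^{n(n+1)/2}. -/

import Mathlib

open Matrix

/-- Sizes of the blocks: one block of size `n` and `k + n` blocks of size `2`. -/
def blkSize (n k : ℕ) : Fin 1 ⊕ Fin k ⊕ Fin n → Type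
  | Sum.inl _ => Fin n
  | Sum.inr _ => Fin 2

instance blkSizeFintype (n k : ℕ) : ∀ i, Fintype (blkSize n k i)
  | Sum.inl _ => inferInstanceAs (Fintype (Fin n))
  | Sum.inr _ => inferInstanceAs (Fintype (Fin 2))

instance blkSizeDecEq (n k : ℕ) : ∀ i, DecidableEq (blkSize n k i)
  | Sum.inl _ => inferInstanceAs (DecidableEq (Fin n))
  | Sum.inr _ => inferInstanceAs (DecidableEq (Fin 2))

/-- The blocks of the Gram matrix `B_L`: one `n × n` tridiagonal block with diagonal
entries `-2d` and off-diagonal entries `d`; `n(n-1)/2` copies of the block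
`[[-2εε̄, -(ε+ε̄)], [-(ε+ε̄), -2]]`; and `n` copies of `[[2εε̄, ε+ε̄], [ε+ε̄, 2]]`. -/
noncomputable def BLblocks (d : ℤ) (n : ℕ) (ε : ℂ) :
    (i : Fin 1 ⊕ Fin (n * (n - 1) / 2) ⊕ Fin n) →
      Matrix (blkSize n (n * (n - 1) / 2) i) (blkSize n (n * (n - 1) / 2) i) ℂ
  | Sum.inl _ => Matrix.of fun i j : Fin n =>
      if i = j then -2 * (d : ℂ)
      else if (i : ℕ) + 1 = (j : ℕ) ∨ (j : ℕ) + 1 = (i : ℕ) then (d : ℂ)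
      else 0
  | Sum.inr (Sum.inl _) =>
      !![-2 * ε * (starRingEnd ℂ) ε, -(ε + (starRingEnd ℂ) ε);
         -(ε + (starRingEnd ℂ) ε), -2]
  | Sum.inr (Sum.inr _) =>
      !![2 * ε * (starRingEnd ℂ) ε, ε + (starRingEnd ℂ) ε;
         ε + (starRingEnd ℂ) ε, 2]

noncomputable def Td (c : ℂ) (m : ℕ) : Matrix (Fin m) (Fin m) ℂ :=
  Matrix.of fun i j : Fin m =>
    if i = j then -2 * c
    else if (i : ℕ) + 1 = (j : ℕ) ∨ (j : ℕ) + 1 = (i : ℕ) then c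
    else 0

lemma Td_apply (c : ℂ) (m : ℕ) (i j : Fin m) :
    Td c m i j = if (i : ℕ) = (j : ℕ) then -2 * c
      else if (i : ℕ) + 1 = (j : ℕ) ∨ (j : ℕ) + 1 = (i : ℕ) then c else 0 := by
  simp [Td, Fin.ext_iff]

lemma Td_submatrix (c : ℂ) (m : ℕ) :
    (Td c (m + 1)).submatrix Fin.succ Fin.succ = Td c m := by
  ext i j
  simp [Td_apply]

lemma detTd (c : ℂ) : ∀ m : ℕ, (Td c m).det = (-c) ^ m * (m + 1)
  | 0 => by simp
  | 1 => by
      rw [show (Td c 1) = !![-2 * c] by ext i j; fin_cases i; fin_cases j; simp [Td_apply]]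
      simp; ring
  | (m + 2) => by
      rw [det_succ_row_zero, Fin.sum_univ_succ, Fin.sum_univ_succ]
      have htail : ∀ j : Fin m, (-1 : ℂ) ^ ((j.succ.succ : Fin (m+2)) : ℕ) *
          Td c (m+2) 0 j.succ.succ *
          ((Td c (m+2)).submatrix Fin.succ (Fin.succAbove j.succ.succ)).det = 0 := by
        intro j
        have h2 : ((j.succ.succ : Fin (m+2)) : ℕ) = (j : ℕ) + 2 := by simp
        have : Td c (m+2) 0 j.succ.succ = 0 := by
          rw [Td_apply]
          simp only [Fin.val_zero, h2]
          rw [if_neg (by omega), if_neg (by omega)]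
        rw [this]; ring
      rw [Finset.sum_eq_zero fun j _ => htail j]
      simp only [Fin.succ_zero_eq_one]
      -- term j = 0
      have h00 : Td c (m+2) 0 0 = -2 * c := by rw [Td_apply]; simp
      have hsub0 : (Td c (m+2)).submatrix Fin.succ (Fin.succAbove 0) = Td c (m+1) := by
        rw [Fin.succAbove_zero, Td_submatrix]
      -- term j = 1
      have h01 : Td c (m+2) 0 1 = c := by rw [Td_apply]; simp
      have hM1 : ((Td c (m+2)).submatrix Fin.succ (Fin.succAbove 1)).det
          = c * (Td c m).det := by
        rw [det_succ_column_zero, Fin.sum_univ_succ]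
        have htail2 : ∀ i : Fin m,
            (-1 : ℂ) ^ ((i.succ : Fin (m+1)) : ℕ) *
              (Td c (m+2)).submatrix Fin.succ (Fin.succAbove 1) i.succ 0 *
              (((Td c (m+2)).submatrix Fin.succ (Fin.succAbove 1)).submatrix
                i.succ.succAbove Fin.succ).det = 0 := by
          intro i
          have : (Td c (m+2)).submatrix Fin.succ (Fin.succAbove 1) i.succ 0 = 0 := by
            have hca : (1 : Fin (m+2)).succAbove 0 = 0 := by
              rw [Fin.succAbove_of_castSucc_lt]
              · rfl
              · simp [Fin.lt_iff_val_lt_val]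
            simp only [submatrix_apply, hca]
            rw [Td_apply]
            simp
          rw [this]; ring
        rw [Finset.sum_eq_zero fun i _ => htail2 i]
        have hval : (Td c (m+2)).submatrix Fin.succ (Fin.succAbove 1) 0 0 = c := by
          have hca : (1 : Fin (m+2)).succAbove 0 = 0 := by
            rw [Fin.succAbove_of_castSucc_lt]
            · rfl
            · simp [Fin.lt_iff_val_lt_val]
          simp only [submatrix_apply, hca]
          rw [Td_apply]; simp
        have hmin : ((Td c (m+2)).submatrix Fin.succ (Fin.succAbove 1)).submatrix
            (Fin.succAbove 0) Fin.succ = Td c m := by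
          ext i j
          have hcb : (1 : Fin (m+2)).succAbove j.succ = j.succ.succ := by
            rw [Fin.succAbove_of_le_castSucc]
            simp [Fin.le_iff_val_le_val]
          simp only [submatrix_apply, Fin.succAbove_zero, hcb]
          simp [Td_apply]
        rw [hval, hmin]
        simp
      rw [h00, h01, hsub0, hM1, detTd c m, detTd c (m+1)]
      simp only [Fin.val_zero, Fin.val_one]
      push_cast
      ring

/-- Reindexing the sigma type of the blocks. -/
def blkEquiv (n k : ℕ) :
    (Σ i : Fin 1 ⊕ Fin k ⊕ Fin n, blkSize n k i) ≃ (Fin n ⊕ Fin 2 × (Fin k ⊕ Fin n)) where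
  toFun := fun x => match x with
    | ⟨Sum.inl _, v⟩ => Sum.inl v
    | ⟨Sum.inr j, v⟩ => Sum.inr (v, j)
  invFun := fun x => match x with
    | Sum.inl v => ⟨Sum.inl 0, v⟩
    | Sum.inr (v, j) => ⟨Sum.inr j, v⟩
  left_inv := by
    rintro ⟨a | j, v⟩
    · obtain rfl : (0 : Fin 1) = a := Subsingleton.elim _ _
      rfl
    · rfl
  right_inv := by
    rintro (v | ⟨v, j⟩) <;> rfl

/-- The determinant of the block-diagonal Gram matrix `B_L` equals
`(-d)^n · (n+1) · (4εε̄ - (ε+ε̄)²)^{n(n+1)/2}`. -/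
theorem det_BL (d : ℤ) (n : ℕ) (hn : 1 ≤ n) (ε : ℂ) :
    (Matrix.blockDiagonal' (BLblocks d n ε)).det
      = (-(d : ℂ)) ^ n * (n + 1) *
        (4 * ε * (starRingEnd ℂ) ε - (ε + (starRingEnd ℂ) ε) ^ 2) ^ (n * (n + 1) / 2) := by
  set k := n * (n - 1) / 2 with hk
  set B : (Fin k ⊕ Fin n) → Matrix (Fin 2) (Fin 2) ℂ :=
    fun j => BLblocks d n ε (Sum.inr j) with hB
  have hM : blockDiagonal' (BLblocks d n ε)
      = (fromBlocks (Td (d : ℂ) n) 0 0 (blockDiagonal B)).submatrix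
          (blkEquiv n k) (blkEquiv n k) := by
    ext ⟨i, v⟩ ⟨j, w⟩
    rcases i with a | i <;> rcases j with b | j
    · obtain rfl : a = b := Subsingleton.elim _ _
      rw [blockDiagonal'_apply_eq]
      rfl
    · rw [blockDiagonal'_apply_ne _ _ _ (by simp)]
      rfl
    · rw [blockDiagonal'_apply_ne _ _ _ (by simp)]
      rfl
    · by_cases h : i = j
      · subst h
        rw [blockDiagonal'_apply_eq]
        show B i v w = blockDiagonal B (v, i) (w, i)
        exact (blockDiagonal_apply_eq (m := Fin 2) (n := Fin 2) B v w i).symm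
      · rw [blockDiagonal'_apply_ne _ _ _ (by simpa using h)]
        show (0 : ℂ) = blockDiagonal B (v, i) (w, j)
        exact (blockDiagonal_apply_ne (m := Fin 2) (n := Fin 2) B v w h).symm
  rw [hM, det_submatrix_equiv_self, det_fromBlocks_zero₂₁, detTd, det_blockDiagonal,
    Fintype.prod_sum_type]
  have hneg : ∀ a : Fin k, (B (Sum.inl a)).det
      = 4 * ε * (starRingEnd ℂ) ε - (ε + (starRingEnd ℂ) ε) ^ 2 := by
    intro a
    show (!![-2 * ε * (starRingEnd ℂ) ε, -(ε + (starRingEnd ℂ) ε);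
         -(ε + (starRingEnd ℂ) ε), -2] : Matrix (Fin 2) (Fin 2) ℂ).det = _
    rw [det_fin_two_of]; ring
  have hpos : ∀ a : Fin n, (B (Sum.inr a)).det
      = 4 * ε * (starRingEnd ℂ) ε - (ε + (starRingEnd ℂ) ε) ^ 2 := by
    intro a
    show (!![2 * ε * (starRingEnd ℂ) ε, ε + (starRingEnd ℂ) ε;
         ε + (starRingEnd ℂ) ε, 2] : Matrix (Fin 2) (Fin 2) ℂ).det = _
    rw [det_fin_two_of]; ring
  simp only [hneg, hpos, Finset.prod_const, Finset.card_univ, Fintype.card_fin]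
  rw [← pow_add]
  have hkn : k + n = n * (n + 1) / 2 := by
    obtain ⟨m, rfl⟩ : ∃ m, n = m + 1 := ⟨n - 1, by omega⟩
    have h1 : (m + 1) * (m + 1 - 1) = m * (m + 1) := by rw [Nat.add_sub_cancel, Nat.mul_comm]
    have h2 : (m + 1) * (m + 1 + 1) = m * (m + 1) + 2 * (m + 1) := by ring
    have h3 : m * (m + 1) % 2 = 0 := Nat.even_iff.mp (Nat.even_mul_succ_self m)
    rw [hk, h1, h2]
    omega
  rw [hkn]
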